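/- In the torus example X = 𝕋 ∪ H, for every point y₀ ∈ 𝕋 the orbit of y₀ under the group of surjective isometries of (X, d) is dense in 𝕋 but not closed in X; moreover, H is a single orbit of the isometry group. -/

import Mathlib

/-- The distance of the Z-construction on the disjoint union `Y ⊕ (Y × ℝ)`. -/
noncomputable def zdist {Y : Type*} [MetricSpace Y] (R M : ℝ) :
    Y ⊕ Y × ℝ → Y ⊕ Y × ℝ → ℝ
  | Sum.inl y₁, Sum.inl y₂ => dist y₁ y₂
  | Sum.inl y₁, Sum.inr q => dist y₁ q.1 + R
  | Sum.inr p, Sum.inl y₂ => dist p.1 y₂ + R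
  | Sum.inr p, Sum.inr q => dist p.1 q.1 + min |p.2 - q.2| M

/-- The 2-torus `𝕋 = AddCircle 1 × AddCircle 1` with the product (max) metric. -/
abbrev T2 : Type := AddCircle (1 : ℝ) × AddCircle (1 : ℝ)

/-- The dense one-parameter subgroup `g(t) = (t mod 1, αt mod 1)` of the torus. -/
noncomputable def torusFlow (α : ℝ) (t : ℝ) : T2 :=
  ((t : AddCircle (1 : ℝ)), ((α * t : ℝ) : AddCircle (1 : ℝ)))

/-- The space `X = 𝕋 ∪ H` where `H = {(g(t), t) : t ∈ ℝ}`, as a subset of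
`Z = 𝕋 ⊕ (𝕋 × ℝ)`. -/
def torusX (α : ℝ) : Set (T2 ⊕ T2 × ℝ) :=
  {z | ∃ y : T2, z = Sum.inl y} ∪ {z | ∃ t : ℝ, z = Sum.inr (torusFlow α t, t)}

theorem memT (α : ℝ) (y : T2) : (Sum.inl y : T2 ⊕ T2 × ℝ) ∈ torusX α :=
  Or.inl ⟨y, rfl⟩

theorem memH (α : ℝ) (t : ℝ) :
    (Sum.inr (torusFlow α t, t) : T2 ⊕ T2 × ℝ) ∈ torusX α :=
  Or.inr ⟨t, rfl⟩

/-- The orbit of a point `x` of `X = 𝕋 ∪ H` under the group of surjective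
isometries of `(X, d)`. -/
def isomOrbit (α R M : ℝ) (x : torusX α) : Set (torusX α) :=
  {z | ∃ φ : torusX α → torusX α,
    Function.Surjective φ ∧
    (∀ p q : torusX α, zdist R M (φ p).1 (φ q).1 = zdist R M p.1 q.1) ∧
    φ x = z}

namespace TorusAux

lemma torusFlow_add (α s t : ℝ) :
    torusFlow α (s + t) = torusFlow α s + torusFlow α t := by
  simp [torusFlow, Prod.ext_iff, mul_add, AddCircle.coe_add]

lemma torusFlow_zero (α : ℝ) : torusFlow α 0 = 0 := by
  simp [torusFlow, Prod.ext_iff]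

lemma torusFlow_neg (α t : ℝ) : torusFlow α (-t) = -torusFlow α t := by
  have h := torusFlow_add α t (-t)
  rw [add_neg_cancel, torusFlow_zero] at h
  exact (neg_eq_of_add_eq_zero_right h.symm).symm

/-- membership in the inr part of `torusX` -/
lemma mem_inr {α : ℝ} {z : T2 ⊕ T2 × ℝ} (hz : z ∈ torusX α) {q : T2 × ℝ}
    (h : z = Sum.inr q) : ∃ t : ℝ, q = (torusFlow α t, t) := by
  rcases hz with ⟨y, hy⟩ | ⟨t, ht⟩
  · rw [h] at hy; exact absurd hy (by simp)
  · rw [h] at ht; exact ⟨t, Sum.inr.inj ht⟩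

/-- The flow isometry on the ambient sum type. -/
noncomputable def flowMap (α s : ℝ) : T2 ⊕ T2 × ℝ → T2 ⊕ T2 × ℝ
  | Sum.inl y => Sum.inl (y + torusFlow α s)
  | Sum.inr p => Sum.inr (p.1 + torusFlow α s, p.2 + s)

lemma flowMap_mem (α s : ℝ) {z : T2 ⊕ T2 × ℝ} (hz : z ∈ torusX α) :
    flowMap α s z ∈ torusX α := by
  rcases hz with ⟨y, hy⟩ | ⟨t, ht⟩
  · subst hy; exact Or.inl ⟨_, rfl⟩
  · subst ht
    refine Or.inr ⟨t + s, ?_⟩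
    simp [flowMap, torusFlow_add]

lemma flowMap_flowMap (α s : ℝ) (z : T2 ⊕ T2 × ℝ) :
    flowMap α (-s) (flowMap α s z) = z := by
  cases z with
  | inl y => simp [flowMap, add_assoc, ← torusFlow_add, torusFlow_zero]
  | inr p => simp [flowMap, add_assoc, ← torusFlow_add, torusFlow_zero]

lemma flowMap_zdist (α R M s : ℝ) (z w : T2 ⊕ T2 × ℝ) :
    zdist R M (flowMap α s z) (flowMap α s w) = zdist R M z w := by
  cases z <;> cases w <;>
    simp [flowMap, zdist, dist_add_right, add_sub_add_right_eq_sub]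

/-- The flow isometry as a self-map of the subtype. -/
noncomputable def flowIso (α s : ℝ) (x : torusX α) : torusX α :=
  ⟨flowMap α s x.1, flowMap_mem α s x.2⟩

lemma flowIso_surj (α s : ℝ) : Function.Surjective (flowIso α s) := by
  intro z
  refine ⟨⟨flowMap α (-s) z.1, flowMap_mem α (-s) z.2⟩, ?_⟩
  apply Subtype.ext
  show flowMap α s (flowMap α (-s) z.1) = z.1
  have := flowMap_flowMap α (-s) z.1
  simpa using this

lemma flowIso_mem_orbit (α R M s : ℝ) (x : torusX α) :
    flowIso α s x ∈ isomOrbit α R M x :=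
  ⟨flowIso α s, flowIso_surj α s, fun p q => flowMap_zdist α R M s p.1 q.1, rfl⟩

end TorusAux

namespace TorusAux

/-- density of `ℤ + αℤ` in `ℝ` -/
lemma dense_ZaZ {α : ℝ} (hα : Irrational α) (c ε : ℝ) (hε : 0 < ε) :
    ∃ m n : ℤ, |(m : ℝ) + n * α - c| < ε := by
  have hd : Dense ((AddSubgroup.closure {(1 : ℝ), α} : AddSubgroup ℝ) : Set ℝ) := by
    rcases AddSubgroup.dense_or_cyclic (AddSubgroup.closure {(1:ℝ), α}) with h | ⟨a, ha⟩
    · exact h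
    · exfalso
      have h1 : (1:ℝ) ∈ AddSubgroup.closure {(1:ℝ), α} :=
        AddSubgroup.subset_closure (by simp)
      have h2 : α ∈ AddSubgroup.closure {(1:ℝ), α} :=
        AddSubgroup.subset_closure (by simp)
      rw [ha, AddSubgroup.mem_closure_singleton] at h1 h2
      obtain ⟨n, hn⟩ := h1
      obtain ⟨m, hm⟩ := h2
      have hn0 : (n : ℝ) ≠ 0 := by
        rintro h; rw [zsmul_eq_mul, h, zero_mul] at hn; norm_num at hn
      exact hα ⟨(m : ℚ)/(n : ℚ), by
        push_cast
        rw [div_eq_iff (by exact_mod_cast hn0)]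
        rw [zsmul_eq_mul] at hn hm
        calc (m:ℝ) = ↑m * (↑n * a) := by rw [hn, mul_one]
          _ = (↑m * a) * ↑n := by ring
          _ = α * ↑n := by rw [hm]⟩
  obtain ⟨x, hx1, hx2⟩ := Metric.dense_iff.mp hd c ε hε
  rw [SetLike.mem_coe, AddSubgroup.mem_closure_pair] at hx2
  obtain ⟨m, n, hmn⟩ := hx2
  refine ⟨m, n, ?_⟩
  have : dist x c < ε := Metric.mem_ball.mp hx1
  rw [Real.dist_eq] at this
  rw [zsmul_eq_mul, zsmul_eq_mul] at hmn
  calc |(m:ℝ) + n * α - c| = |x - c| := by rw [← hmn]; ring_nf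
    _ < ε := this


lemma norm_coe_small {x : ℝ} (h : |x| ≤ 1/2) : ‖(x : AddCircle (1:ℝ))‖ = |x| := by
  rw [AddCircle.norm_coe_eq_abs_iff _ one_ne_zero]
  simpa using h

lemma dist_coe_small {u v : ℝ} (h : |u - v| ≤ 1/2) :
    dist (u : AddCircle (1:ℝ)) (v : AddCircle (1:ℝ)) = |u - v| := by
  rw [dist_eq_norm, ← AddCircle.coe_sub, norm_coe_small h]

/-- density of the flow in the torus -/
lemma dense_flow {α : ℝ} (hα : Irrational α) (y : T2) {ε : ℝ} (hε : 0 < ε) :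
    ∃ t : ℝ, dist (torusFlow α t) y < ε := by
  obtain ⟨a, ha⟩ := QuotientAddGroup.mk_surjective y.1
  obtain ⟨b, hb⟩ := QuotientAddGroup.mk_surjective y.2
  set ε' := min ε (1/2) with hε'
  have hε'0 : 0 < ε' := lt_min hε (by norm_num)
  obtain ⟨m, n, hmn⟩ := dense_ZaZ hα (b - α * a) ε' hε'0
  refine ⟨a + n, ?_⟩
  rw [Prod.dist_eq, ← ha, ← hb]
  have h1 : dist ((a + (n:ℝ) : ℝ) : AddCircle (1:ℝ)) (a : AddCircle (1:ℝ)) = 0 := by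
    rw [dist_eq_zero]
    rw [AddCircle.coe_add]
    simp [AddCircle.coe_eq_zero_iff]
  have h2 : dist ((α * (a + n) : ℝ) : AddCircle (1:ℝ)) (b : AddCircle (1:ℝ)) < ε := by
    rw [dist_eq_norm, ← AddCircle.coe_sub]
    have key : ((α * (a + n) - b : ℝ) : AddCircle (1:ℝ))
        = ((α * (a + n) - b + m : ℝ) : AddCircle (1:ℝ)) := by
      rw [AddCircle.coe_add]
      have : ((m : ℝ) : AddCircle (1:ℝ)) = 0 := by
        simp [AddCircle.coe_eq_zero_iff]
      rw [this, add_zero]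
    rw [key]
    have habs : |α * (a + n) - b + m| < ε' := by
      have : α * (a + n) - b + m = (m:ℝ) + n * α - (b - α * a) := by ring
      rw [this]; exact hmn
    calc ‖((α * (a + n) - b + m : ℝ) : AddCircle (1:ℝ))‖ = |α * (a + n) - b + m| :=
          norm_coe_small (le_of_lt (lt_of_lt_of_le habs (min_le_right _ _)))
      _ < ε' := habs
      _ ≤ ε := min_le_left _ _
  simp only [torusFlow]
  rw [max_lt_iff]
  exact ⟨by rw [h1] at *; linarith [h1 ▸ hε], h2⟩


lemma dist_flow (α : ℝ) {t u : ℝ} (h1 : |t - u| ≤ 1/2) (h2 : |α * (t - u)| ≤ 1/2) :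
    dist (torusFlow α t) (torusFlow α u) = max |t - u| (|α| * |t - u|) := by
  rw [Prod.dist_eq]
  simp only [torusFlow]
  rw [dist_coe_small h1,
    dist_coe_small (show |α * t - α * u| ≤ 1/2 by
      rw [show α * t - α * u = α * (t - u) by ring]; exact h2)]
  rw [show α * t - α * u = α * (t - u) by ring, abs_mul]

/-- No equilateral triangles among three points of `H` at small scale. -/
lemma no_eq_H {α R M : ℝ} (hM : 0 < M) (hRM : M ≤ 2 * R) {ε : ℝ} (hε : 0 < ε)
    (hεM : ε < M) (hεα : ε * (1 + |α|) ≤ 1/2) {t u v : ℝ}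
    (h1 : zdist R M (Sum.inr (torusFlow α t, t) : T2 ⊕ T2 × ℝ)
            (Sum.inr (torusFlow α u, u)) = ε)
    (h2 : zdist R M (Sum.inr (torusFlow α t, t) : T2 ⊕ T2 × ℝ)
            (Sum.inr (torusFlow α v, v)) = ε)
    (h3 : zdist R M (Sum.inr (torusFlow α u, u) : T2 ⊕ T2 × ℝ)
            (Sum.inr (torusFlow α v, v)) = ε) : False := by
  have hα0 : (0:ℝ) ≤ |α| := abs_nonneg α
  -- each pairwise equation forces the parameter gap to be a fixed value r
  have key : ∀ a b : ℝ, zdist R M (Sum.inr (torusFlow α a, a) : T2 ⊕ T2 × ℝ)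
      (Sum.inr (torusFlow α b, b)) = ε → max |a - b| (|α| * |a - b|) + |a - b| = ε := by
    intro a b hab
    simp only [zdist] at hab
    have hd0 : 0 ≤ dist (torusFlow α a) (torusFlow α b) := dist_nonneg
    have hmin : min |a - b| M = |a - b| := by
      rcases le_total |a - b| M with h | h
      · exact min_eq_left h
      · exfalso
        have : min |a - b| M = M := min_eq_right h
        rw [this] at hab; linarith
    rw [hmin] at hab
    have hab' : |a - b| ≤ ε := by linarith
    have hc1 : |a - b| ≤ 1/2 := by nlinarith
    have hc2 : |α * (a - b)| ≤ 1/2 := by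
      rw [abs_mul]; nlinarith
    rw [dist_flow α hc1 hc2] at hab
    exact hab
  have k1 := key _ _ h1
  have k2 := key _ _ h2
  have k3 := key _ _ h3
  -- the gaps are equal
  have heq : ∀ a b : ℝ, 0 ≤ a → 0 ≤ b →
      max a (|α| * a) + a = max b (|α| * b) + b → a = b := by
    intro a b ha hb hab
    rcases le_total |α| 1 with h | h
    · rw [max_eq_left (by nlinarith), max_eq_left (by nlinarith)] at hab; linarith
    · rw [max_eq_right (by nlinarith), max_eq_right (by nlinarith)] at hab; nlinarith
  set r := |t - u| with hr
  have e2 : |t - v| = r := heq _ _ (abs_nonneg _) (abs_nonneg _) (k2.trans k1.symm)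
  have e3 : |u - v| = r := heq _ _ (abs_nonneg _) (abs_nonneg _) (k3.trans k1.symm)
  have hrpos : 0 < r := by
    rcases lt_or_eq_of_le (abs_nonneg (t - u)) with h | h
    · exact h
    · exfalso; rw [← hr] at h; rw [← h] at k1; simp at k1; nlinarith [k1]
  -- three points in ℝ pairwise at distance r > 0: impossible
  have h1' : t - u = r ∨ t - u = -r := abs_eq (le_of_lt hrpos) |>.mp hr.symm
  have h2' : t - v = r ∨ t - v = -r := abs_eq (le_of_lt hrpos) |>.mp e2
  have h3' : u - v = r ∨ u - v = -r := abs_eq (le_of_lt hrpos) |>.mp e3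
  rcases h1' with h1' | h1' <;> rcases h2' with h2' | h2' <;>
    rcases h3' with h3' | h3' <;> linarith

/-- Equilateral triangles based at any torus point, at any small scale. -/
lemma eq_T (y : T2) {ε : ℝ} (hε : 0 < ε) (hε2 : ε ≤ 1/2) :
    ∃ b c : T2, dist y b = ε ∧ dist y c = ε ∧ dist b c = ε := by
  have habs : |ε| ≤ 1/2 := by rw [abs_of_nonneg (le_of_lt hε)]; exact hε2
  have hn : ‖((ε:ℝ) : AddCircle (1:ℝ))‖ = ε := by
    rw [norm_coe_small habs, abs_of_nonneg (le_of_lt hε)]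
  refine ⟨(y.1 + (ε : AddCircle (1:ℝ)), y.2), (y.1, y.2 + (ε : AddCircle (1:ℝ))), ?_, ?_, ?_⟩ <;>
  · rw [Prod.dist_eq]
    simp only [dist_eq_norm, add_sub_cancel_left, sub_add_cancel_left, sub_self,
      sub_add_eq_sub_sub, norm_zero, norm_neg]
    simp [hn, le_of_lt hε]


section Phi

variable {α R M : ℝ}

/-- a convenient small scale -/
noncomputable def eps0 (α R M : ℝ) : ℝ := min (M/2) (min (R/2) (1/2/(1+|α|)))

lemma eps0_pos (hM : 0 < M) (hRM : M ≤ 2*R) : 0 < eps0 α R M := by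
  have : (0:ℝ) < 1 + |α| := by positivity
  refine lt_min (by linarith) (lt_min (by linarith) (by positivity))

lemma eps0_lt_M (hM : 0 < M) : eps0 α R M < M :=
  lt_of_le_of_lt (min_le_left _ _) (by linarith)

lemma eps0_lt_R (hM : 0 < M) (hRM : M ≤ 2*R) : eps0 α R M < R :=
  lt_of_le_of_lt (le_trans (min_le_right _ _) (min_le_left _ _)) (by linarith)

lemma eps0_mul (hM : 0 < M) : eps0 α R M * (1 + |α|) ≤ 1/2 := by
  have h1 : (0:ℝ) < 1 + |α| := by positivity
  have h2 : eps0 α R M ≤ 1/2/(1+|α|) := le_trans (min_le_right _ _) (min_le_right _ _)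
  calc eps0 α R M * (1 + |α|) ≤ 1/2/(1+|α|) * (1+|α|) := by nlinarith
    _ = 1/2 := div_mul_cancel₀ _ (ne_of_gt h1)

lemma eps0_le_half (hM : 0 < M) : eps0 α R M ≤ 1/2 := by
  have h1 : (1:ℝ) ≤ 1 + |α| := by simp [abs_nonneg]
  have h2 : eps0 α R M ≤ 1/2/(1+|α|) := le_trans (min_le_right _ _) (min_le_right _ _)
  calc eps0 α R M ≤ 1/2/(1+|α|) := h2
    _ ≤ 1/2 := div_le_self (by norm_num) h1

variable (hM : 0 < M) (hRM : M ≤ 2*R)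
variable {φ : torusX α → torusX α} (hsurj : Function.Surjective φ)
  (hiso : ∀ p q : torusX α, zdist R M (φ p).1 (φ q).1 = zdist R M p.1 q.1)

include hM hRM hsurj hiso

/-- surjective isometries map `𝕋` into `𝕋` -/
lemma phi_inl (y : T2) : ∃ y' : T2, (φ ⟨Sum.inl y, memT α y⟩).1 = Sum.inl y' := by
  set x : torusX α := ⟨Sum.inl y, memT α y⟩ with hx
  cases h : (φ x).1 with
  | inl y' => exact ⟨y', rfl⟩
  | inr q =>
    exfalso
    obtain ⟨t, ht⟩ := mem_inr (φ x).2 h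
    rw [ht] at h
    set ε := eps0 α R M with hεdef
    obtain ⟨b, c, hb, hc, hbc⟩ := eq_T y (eps0_pos hM hRM) (eps0_le_half hM)
    set B : torusX α := ⟨Sum.inl b, memT α b⟩ with hB
    set C : torusX α := ⟨Sum.inl c, memT α c⟩ with hC
    -- images of B and C must be in H
    have hBd : zdist R M (φ x).1 (φ B).1 = ε := by
      rw [hiso x B]; simpa [zdist, hx, hB] using hb
    have hCd : zdist R M (φ x).1 (φ C).1 = ε := by
      rw [hiso x C]; simpa [zdist, hx, hC] using hc
    have hBCd : zdist R M (φ B).1 (φ C).1 = ε := by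
      rw [hiso B C]; simpa [zdist, hB, hC] using hbc
    obtain ⟨s, hs⟩ : ∃ s, (φ B).1 = Sum.inr (torusFlow α s, s) := by
      cases h2 : (φ B).1 with
      | inl b' =>
        exfalso
        rw [h, h2] at hBd
        simp only [zdist] at hBd
        have : R ≤ ε := by linarith [dist_nonneg (x := (torusFlow α t)) (y := b')]
        linarith [eps0_lt_R (α := α) hM hRM]
      | inr qb =>
        obtain ⟨s, hsq⟩ := mem_inr (φ B).2 h2
        exact ⟨s, by rw [hsq]⟩
    obtain ⟨u, hu⟩ : ∃ u, (φ C).1 = Sum.inr (torusFlow α u, u) := by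
      cases h2 : (φ C).1 with
      | inl c' =>
        exfalso
        rw [h, h2] at hCd
        simp only [zdist] at hCd
        have : R ≤ ε := by linarith [dist_nonneg (x := (torusFlow α t)) (y := c')]
        linarith [eps0_lt_R (α := α) hM hRM]
      | inr qc =>
        obtain ⟨u, huq⟩ := mem_inr (φ C).2 h2
        exact ⟨u, by rw [huq]⟩
    rw [h, hs] at hBd
    rw [h, hu] at hCd
    rw [hs, hu] at hBCd
    exact no_eq_H hM hRM (eps0_pos hM hRM) (eps0_lt_M hM) (eps0_mul hM) hBd hCd hBCd

/-- surjective isometries map `H` into `H` -/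
lemma phi_inr (t : ℝ) :
    ∃ s : ℝ, (φ ⟨Sum.inr (torusFlow α t, t), memH α t⟩).1 = Sum.inr (torusFlow α s, s) := by
  set x : torusX α := ⟨Sum.inr (torusFlow α t, t), memH α t⟩ with hx
  cases h : (φ x).1 with
  | inr q =>
    obtain ⟨s, hsq⟩ := mem_inr (φ x).2 h
    exact ⟨s, by rw [hsq]⟩
  | inl y =>
    exfalso
    set ε := eps0 α R M with hεdef
    obtain ⟨b, c, hb, hc, hbc⟩ := eq_T y (eps0_pos hM hRM) (eps0_le_half hM)
    obtain ⟨B, hBeq⟩ := hsurj ⟨Sum.inl b, memT α b⟩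
    obtain ⟨C, hCeq⟩ := hsurj ⟨Sum.inl c, memT α c⟩
    have hBd : zdist R M x.1 B.1 = ε := by
      rw [← hiso x B, h, hBeq]; simpa [zdist] using hb
    have hCd : zdist R M x.1 C.1 = ε := by
      rw [← hiso x C, h, hCeq]; simpa [zdist] using hc
    have hBCd : zdist R M B.1 C.1 = ε := by
      rw [← hiso B C, hBeq, hCeq]; simpa [zdist] using hbc
    obtain ⟨s, hs⟩ : ∃ s, B.1 = Sum.inr (torusFlow α s, s) := by
      cases h2 : B.1 with
      | inl b' =>
        exfalso
        rw [h2] at hBd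
        simp only [hx, zdist] at hBd
        have : R ≤ ε := by linarith [dist_nonneg (x := (torusFlow α t)) (y := b')]
        linarith [eps0_lt_R (α := α) hM hRM]
      | inr qb =>
        obtain ⟨s, hsq⟩ := mem_inr B.2 h2
        exact ⟨s, by rw [hsq]⟩
    obtain ⟨u, hu⟩ : ∃ u, C.1 = Sum.inr (torusFlow α u, u) := by
      cases h2 : C.1 with
      | inl c' =>
        exfalso
        rw [h2] at hCd
        simp only [hx, zdist] at hCd
        have : R ≤ ε := by linarith [dist_nonneg (x := (torusFlow α t)) (y := c')]
        linarith [eps0_lt_R (α := α) hM hRM]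
      | inr qc =>
        obtain ⟨u, huq⟩ := mem_inr C.2 h2
        exact ⟨u, by rw [huq]⟩
    rw [hs] at hBd
    rw [hu] at hCd
    rw [hs, hu] at hBCd
    simp only [hx] at hBd hCd
    exact no_eq_H hM hRM (eps0_pos hM hRM) (eps0_lt_M hM) (eps0_mul hM) hBd hCd hBCd

end Phi


/-- A self-map of `ℝ` preserving `min |t-s| M` is affine with slope `±1`. -/
lemma sigma_rigid {σ : ℝ → ℝ} {M : ℝ} (hM : 0 < M)
    (h : ∀ t s, min |σ t - σ s| M = min |t - s| M) :
    ∃ e : ℝ, (e = 1 ∨ e = -1) ∧ ∀ t, σ t = σ 0 + e * t := by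
  have hloc : ∀ t s : ℝ, |t - s| ≤ M/2 → |σ t - σ s| = |t - s| := by
    intro t s hts
    have h1 : min |t - s| M = |t - s| := min_eq_left (by linarith)
    have h2 := h t s
    rw [h1] at h2
    rcases le_total |σ t - σ s| M with hle | hle
    · rwa [min_eq_left hle] at h2
    · rw [min_eq_right hle] at h2; linarith
  set es : ℝ → ℝ := fun s => (σ (s + M/2) - σ s) / (M/2) with hesdef
  have hM2 : (0:ℝ) < M/2 := by linarith
  have hes : ∀ s, σ (s + M/2) - σ s = es s * (M/2) := by
    intro s; rw [hesdef]; field_simp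
  have hesabs : ∀ s, es s = 1 ∨ es s = -1 := by
    intro s
    have h1 : |σ (s + M/2) - σ s| = M/2 := by
      rw [hloc (s + M/2) s (by rw [add_sub_cancel_left, abs_of_pos hM2]),
        add_sub_cancel_left, abs_of_pos hM2]
    rw [hes s, abs_mul, abs_of_pos hM2] at h1
    have h2 : |es s| * (M/2) = 1 * (M/2) := by rw [one_mul]; exact h1
    have : |es s| = 1 := mul_right_cancel₀ (ne_of_gt hM2) h2
    exact abs_eq (by norm_num) |>.mp this
  have key : ∀ n : ℕ, ∀ s t : ℝ, s ≤ t → t - s ≤ M/2 + n * (M/4) →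
      σ t - σ s = es s * (t - s) := by
    intro n
    induction n with
    | zero =>
      intro s t hst hle
      simp only [Nat.cast_zero, zero_mul, add_zero] at hle
      have hd0 : 0 ≤ t - s := by linarith
      have a1 : |σ t - σ s| = t - s := by
        rw [hloc t s (by rw [abs_of_nonneg hd0]; linarith), abs_of_nonneg hd0]
      have a2 : |σ (s + M/2) - σ t| = M/2 - (t - s) := by
        have hg : |s + M/2 - t| = M/2 - (t - s) := by
          rw [abs_of_nonneg (by linarith)]; ring
        rw [hloc (s + M/2) t (by rw [hg]; linarith), hg]
      have a3 := hes s
      rcases hesabs s with he | he <;>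
      · rw [he] at a3 ⊢
        rcases abs_eq hd0 |>.mp a1 with hc | hc <;>
          rcases abs_eq (show (0:ℝ) ≤ M/2 - (t-s) by linarith) |>.mp a2 with hcc | hcc <;>
          linarith
    | succ n ih =>
      intro s t hst hle
      rcases le_total (t - s) (M/2 + n * (M/4)) with hcase | hcase
      · exact ih s t hst hcase
      have hn0 : (0:ℝ) ≤ n * (M/4) := by positivity
      have ht' : σ (t - M/4) - σ s = es s * (t - M/4 - s) :=
        ih s (t - M/4) (by linarith) (by push_cast at hle ⊢; linarith)
      have ht'' : σ (t - M/2) - σ s = es s * (t - M/2 - s) :=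
        ih s (t - M/2) (by linarith) (by push_cast at hle ⊢; linarith)
      have b1 : |σ t - σ (t - M/4)| = M/4 := by
        have hg : |t - (t - M/4)| = M/4 := by rw [sub_sub_cancel, abs_of_pos (by linarith)]
        rw [hloc t (t - M/4) (by rw [hg]; linarith), hg]
      have b2 : |σ t - σ (t - M/2)| = M/2 := by
        have hg : |t - (t - M/2)| = M/2 := by rw [sub_sub_cancel, abs_of_pos hM2]
        rw [hloc t (t - M/2) (le_of_eq hg), hg]
      have e1 : es s * (t - M/4 - s) = es s * (t - s) - es s * (M/4) := by ring
      have e2 : es s * (t - M/2 - s) = es s * (t - s) - es s * (M/2) := by ring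
      rcases hesabs s with he | he <;>
      · rw [he] at ht' ht'' e1 e2 ⊢
        rcases abs_eq (show (0:ℝ) ≤ M/4 by linarith) |>.mp b1 with hc | hc <;>
          rcases abs_eq (show (0:ℝ) ≤ M/2 by linarith) |>.mp b2 with hcc | hcc <;>
          linarith
  have key2 : ∀ s t : ℝ, s ≤ t → σ t - σ s = es s * (t - s) := by
    intro s t hst
    obtain ⟨n, hn⟩ := exists_nat_ge ((t - s) * 4 / M)
    refine key n s t hst ?_
    rw [div_le_iff₀ (by linarith)] at hn
    nlinarith
  have hconst : ∀ s t : ℝ, t ≤ s → es s = es t := by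
    intro s t hts
    have h1 : σ (s + M/2) - σ t = es t * (s + M/2 - t) := key2 t (s + M/2) (by linarith)
    have h2 : σ s - σ t = es t * (s - t) := key2 t s hts
    have h3 := hes s
    have h4 : es t * (s + M/2 - t) = es t * (s - t) + es t * (M/2) := by ring
    have h5 : es s * (M/2) = es t * (M/2) := by linarith
    exact mul_right_cancel₀ (ne_of_gt hM2) h5
  refine ⟨es 0, hesabs 0, fun t => ?_⟩
  rcases le_total 0 t with ht | ht
  · have h1 := key2 0 t ht
    have h2 : es 0 * (t - 0) = es 0 * t := by ring
    linarith
  · have h1 := key2 t 0 ht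
    have h2 : es 0 = es t := hconst 0 t ht
    have h3 : es t * (0 - t) = -(es t * t) := by ring
    rw [h2]
    linarith


section Phi2

variable {α R M : ℝ} (hα : Irrational α) (hM : 0 < M) (hRM : M ≤ 2*R)
variable {φ : torusX α → torusX α} (hsurj : Function.Surjective φ)
  (hiso : ∀ p q : torusX α, zdist R M (φ p).1 (φ q).1 = zdist R M p.1 q.1)

include hα hM hRM hsurj hiso

/-- Any surjective isometry sends a torus point `y₀` to `g c + y₀` or `g c - y₀`. -/
lemma orbit_inl_form (y₀ : T2) :
    ∃ c : ℝ, (φ ⟨Sum.inl y₀, memT α y₀⟩).1 = Sum.inl (torusFlow α c + y₀) ∨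
             (φ ⟨Sum.inl y₀, memT α y₀⟩).1 = Sum.inl (torusFlow α c - y₀) := by
  choose ψ hψ using phi_inl hM hRM hsurj hiso
  choose σ hσ using phi_inr hM hRM hsurj hiso
  have hψiso : ∀ y y' : T2, dist (ψ y) (ψ y') = dist y y' := by
    intro y y'
    have h := hiso ⟨Sum.inl y, memT α y⟩ ⟨Sum.inl y', memT α y'⟩
    rw [hψ y, hψ y'] at h
    simpa [zdist] using h
  have hψg : ∀ t : ℝ, ψ (torusFlow α t) = torusFlow α (σ t) := by
    intro t
    have h := hiso ⟨Sum.inl (torusFlow α t), memT α _⟩ ⟨Sum.inr (torusFlow α t, t), memH α t⟩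
    rw [hψ, hσ] at h
    simp only [zdist] at h
    have h0 : dist (ψ (torusFlow α t)) (torusFlow α (σ t)) = 0 := by
      rw [dist_self] at h; linarith
    exact dist_eq_zero.mp h0
  have hmin : ∀ t s : ℝ, min |σ t - σ s| M = min |t - s| M := by
    intro t s
    have h := hiso ⟨Sum.inr (torusFlow α t, t), memH α t⟩ ⟨Sum.inr (torusFlow α s, s), memH α s⟩
    rw [hσ, hσ] at h
    simp only [zdist] at h
    have hd : dist (torusFlow α (σ t)) (torusFlow α (σ s))
        = dist (torusFlow α t) (torusFlow α s) := by
      rw [← hψg, ← hψg, hψiso]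
    linarith
  obtain ⟨e, he, hσe⟩ := sigma_rigid hM hmin
  have hy : ∀ t : ℝ, dist (ψ y₀) (torusFlow α (σ t)) = dist y₀ (torusFlow α t) := by
    intro t; rw [← hψg, hψiso]
  have approx : ∀ w : T2, (∀ t : ℝ, dist (ψ y₀) (torusFlow α (σ t)) = dist y₀ (torusFlow α t))
      → (∀ t : ℝ, dist (torusFlow α (σ t)) w = dist (torusFlow α t) y₀) → ψ y₀ = w := by
    intro w _ hw
    by_contra hne
    have hpos : 0 < dist (ψ y₀) w := dist_pos.mpr hne
    obtain ⟨t, ht⟩ := dense_flow hα y₀ (half_pos hpos)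
    have h1 : dist (ψ y₀) (torusFlow α (σ t)) < dist (ψ y₀) w / 2 := by
      rw [hy t, dist_comm]; exact ht
    have h2 : dist (torusFlow α (σ t)) w < dist (ψ y₀) w / 2 := by
      rw [hw t]; exact ht
    have := dist_triangle (ψ y₀) (torusFlow α (σ t)) w
    linarith
  refine ⟨σ 0, ?_⟩
  rcases he with he | he
  · left
    rw [hψ y₀]
    congr 1
    refine approx _ hy (fun t => ?_)
    rw [hσe t, he, one_mul, torusFlow_add]
    rw [show torusFlow α (σ 0) + torusFlow α t = torusFlow α t + torusFlow α (σ 0) by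
      abel, show torusFlow α (σ 0) + y₀ = y₀ + torusFlow α (σ 0) by abel]
    rw [dist_add_right]
  · right
    rw [hψ y₀]
    congr 1
    refine approx _ hy (fun t => ?_)
    have h1 : torusFlow α (σ t) = torusFlow α (σ 0) + -torusFlow α t := by
      rw [hσe t, he, show σ 0 + -1 * t = σ 0 + -t by ring, torusFlow_add, torusFlow_neg]
    rw [h1, sub_eq_add_neg, dist_add_left, dist_neg_neg]

end Phi2


lemma uncountable_circle : ¬ (Set.univ : Set (AddCircle (1:ℝ))).Countable := by
  intro hc
  have hfib : ∀ y : AddCircle (1:ℝ), ({x : ℝ | (x : AddCircle (1:ℝ)) = y}).Countable := by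
    intro y
    obtain ⟨x₀, hx₀⟩ := QuotientAddGroup.mk_surjective y
    have hsub : {x : ℝ | (x : AddCircle (1:ℝ)) = y} ⊆ Set.range (fun n : ℤ => x₀ + n) := by
      intro x hx
      simp only [Set.mem_setOf_eq] at hx
      have : ((x - x₀ : ℝ) : AddCircle (1:ℝ)) = 0 := by
        rw [AddCircle.coe_sub, hx, hx₀, sub_self]
      obtain ⟨n, hn⟩ := (AddCircle.coe_eq_zero_iff (1:ℝ)).mp this
      refine ⟨n, ?_⟩
      simp only [zsmul_eq_mul, mul_one] at hn
      show x₀ + (n : ℝ) = x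
      rw [hn]; ring
    exact Set.Countable.mono hsub (Set.countable_range _)
  have : (Set.univ : Set ℝ).Countable := by
    have : (Set.univ : Set ℝ) ⊆ ⋃ y ∈ (Set.univ : Set (AddCircle (1:ℝ))),
        {x : ℝ | (x : AddCircle (1:ℝ)) = y} := by
      intro x _
      simp only [Set.mem_iUnion, Set.mem_setOf_eq]
      exact ⟨(x : AddCircle (1:ℝ)), trivial, rfl⟩
    exact Set.Countable.mono this (Set.Countable.biUnion hc fun y _ => hfib y)
  exact Cardinal.not_countable_real this

/-- a torus point avoiding both families `g c + y₀` and `g c - y₀` -/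
lemma exists_avoid (α : ℝ) (y₀ : T2) :
    ∃ w : T2, (∀ c : ℝ, w ≠ torusFlow α c + y₀) ∧ (∀ c : ℝ, w ≠ torusFlow α c - y₀) := by
  obtain ⟨a, ha⟩ := QuotientAddGroup.mk_surjective (y₀.1 + y₀.1)
  set S1 : Set (AddCircle (1:ℝ)) :=
    Set.range (fun n : ℤ => ((α * n : ℝ) : AddCircle (1:ℝ)) + y₀.2) with hS1
  set S2 : Set (AddCircle (1:ℝ)) :=
    Set.range (fun n : ℤ => ((α * (a + n) : ℝ) : AddCircle (1:ℝ)) - y₀.2) with hS2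
  have hcount : (S1 ∪ S2).Countable :=
    (Set.countable_range _).union (Set.countable_range _)
  obtain ⟨b, hb⟩ : ∃ b : AddCircle (1:ℝ), b ∉ S1 ∪ S2 := by
    by_contra hcon
    push_neg at hcon
    exact uncountable_circle (Set.Countable.mono (fun x _ => hcon x) hcount)
  refine ⟨(y₀.1, b), ?_, ?_⟩
  · intro c hc
    rw [Prod.ext_iff] at hc
    obtain ⟨hc1, hc2⟩ := hc
    simp only [torusFlow, Prod.fst_add, Prod.snd_add] at hc1 hc2
    have h0 : ((c : ℝ) : AddCircle (1:ℝ)) = 0 := by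
      have := hc1
      rw [right_eq_add] at this
      exact this
    obtain ⟨n, hn⟩ := (AddCircle.coe_eq_zero_iff (1:ℝ)).mp h0
    simp only [zsmul_eq_mul, mul_one] at hn
    apply hb
    left
    refine ⟨n, ?_⟩
    simp only [hn, ← hc2]
  · intro c hc
    rw [Prod.ext_iff] at hc
    obtain ⟨hc1, hc2⟩ := hc
    simp only [torusFlow, Prod.fst_sub, Prod.snd_sub] at hc1 hc2
    have h0 : ((c - a : ℝ) : AddCircle (1:ℝ)) = 0 := by
      rw [AddCircle.coe_sub, ha]
      rw [eq_sub_iff_add_eq] at hc1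
      rw [sub_eq_zero, ← hc1]
    obtain ⟨n, hn⟩ := (AddCircle.coe_eq_zero_iff (1:ℝ)).mp h0
    simp only [zsmul_eq_mul, mul_one] at hn
    apply hb
    right
    refine ⟨n, ?_⟩
    have hca : c = a + n := by linarith [hn]
    simp only [← hca, ← hc2]

end TorusAux


/-- in the torus example `X = 𝕋 ∪ H`, for every `y₀ ∈ 𝕋` the orbit
of `y₀` under the group of surjective isometries of `(X, d)` is dense in `𝕋` but
not closed in `X`; moreover `H` is a single orbit of the isometry group. -/
theorem torus_orbits (α : ℝ) (hα : Irrational α)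
    (R M : ℝ) (hM : 0 < M) (hRM : M ≤ 2 * R) (y₀ : T2) :
    -- the orbit of `y₀` is dense in `𝕋`:
    (∀ y : T2, ∀ ε > (0 : ℝ), ∃ z ∈ isomOrbit α R M ⟨Sum.inl y₀, memT α y₀⟩,
      zdist R M z.1 (Sum.inl y) < ε) ∧
    -- the orbit of `y₀` is not closed in `X`:
    (∃ x : torusX α, x ∉ isomOrbit α R M ⟨Sum.inl y₀, memT α y₀⟩ ∧
      ∀ ε > (0 : ℝ), ∃ z ∈ isomOrbit α R M ⟨Sum.inl y₀, memT α y₀⟩,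
        zdist R M z.1 x.1 < ε) ∧
    -- `H` is a single orbit:
    isomOrbit α R M ⟨Sum.inr (torusFlow α 0, 0), memH α 0⟩ =
      {z : torusX α | ∃ t : ℝ, z.1 = Sum.inr (torusFlow α t, t)} := by
  classical
  have dense_part : ∀ y : T2, ∀ ε > (0:ℝ),
      ∃ z ∈ isomOrbit α R M ⟨Sum.inl y₀, memT α y₀⟩, zdist R M z.1 (Sum.inl y) < ε := by
    intro y ε hε
    obtain ⟨t, ht⟩ := TorusAux.dense_flow hα (y - y₀) hε
    refine ⟨TorusAux.flowIso α t ⟨Sum.inl y₀, memT α y₀⟩,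
      TorusAux.flowIso_mem_orbit α R M t _, ?_⟩
    show zdist R M (TorusAux.flowMap α t (Sum.inl y₀)) (Sum.inl y) < ε
    simp only [TorusAux.flowMap, zdist]
    calc dist (y₀ + torusFlow α t) y = dist (torusFlow α t) (y - y₀) := by
          rw [dist_eq_norm, dist_eq_norm]; congr 1; abel
      _ < ε := ht
  refine ⟨dense_part, ?_, ?_⟩
  · obtain ⟨w, hw1, hw2⟩ := TorusAux.exists_avoid α y₀
    refine ⟨⟨Sum.inl w, memT α w⟩, ?_, fun ε hε => dense_part w ε hε⟩
    rintro ⟨φ, hsurj, hiso, hφ⟩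
    obtain ⟨c, hc | hc⟩ := TorusAux.orbit_inl_form hα hM hRM hsurj hiso y₀
    · rw [hφ] at hc
      exact hw1 c (Sum.inl.inj hc)
    · rw [hφ] at hc
      exact hw2 c (Sum.inl.inj hc)
  · ext z
    constructor
    · rintro ⟨φ, hsurj, hiso, hφ⟩
      obtain ⟨s, hs⟩ := TorusAux.phi_inr hM hRM hsurj hiso 0
      rw [hφ] at hs
      exact ⟨s, hs⟩
    · rintro ⟨t, hz⟩
      refine ⟨TorusAux.flowIso α t, TorusAux.flowIso_surj α t,
        (fun p q => TorusAux.flowMap_zdist α R M t p.1 q.1), ?_⟩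
      apply Subtype.ext
      rw [hz]
      show TorusAux.flowMap α t (Sum.inr (torusFlow α 0, 0)) = Sum.inr (torusFlow α t, t)
      simp [TorusAux.flowMap, TorusAux.torusFlow_zero]
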